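/- Assume ‖Φ(t,s)‖ ≤ K e^{-α(t-s)} for t ≥ s ≥ 0, f is γ-Lipschitz in y, and Kγ/α < 1. If u and v are both equilibria of y' = A(t)y + f(t,y) (i.e., A(t)u + f(t,u) = 0 and A(t)v + f(t,v) = 0 for all t ≥ 0), then u = v. -/

import Mathlib

open Real MeasureTheory Filter Topology

private lemma opDeriv {n : ℕ}
    (F : ℝ → (EuclideanSpace ℝ (Fin n)) →L[ℝ] (EuclideanSpace ℝ (Fin n)))
    (F' : (EuclideanSpace ℝ (Fin n)) →L[ℝ] (EuclideanSpace ℝ (Fin n))) (t : ℝ)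
    (h : ∀ ξ, HasDerivAt (fun s => F s ξ) (F' ξ) t) : HasDerivAt F F' t := by
  classical
  have hrepr : ∀ ξ : EuclideanSpace ℝ (Fin n),
      ∑ i, ξ i • EuclideanSpace.single i (1:ℝ) = ξ := by
    intro ξ
    have := (EuclideanSpace.basisFun (Fin n) ℝ).sum_repr ξ
    simpa [EuclideanSpace.basisFun_repr, EuclideanSpace.basisFun_apply] using this
  set Λ₀ : (Fin n → EuclideanSpace ℝ (Fin n)) →ₗ[ℝ]
      ((EuclideanSpace ℝ (Fin n)) →L[ℝ] (EuclideanSpace ℝ (Fin n))) :=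
    { toFun := fun c => ∑ i, (EuclideanSpace.proj i :
        EuclideanSpace ℝ (Fin n) →L[ℝ] ℝ).smulRight (c i)
      map_add' := by
        intro c₁ c₂
        ext ξ
        simp [ContinuousLinearMap.sum_apply, smul_add, Finset.sum_add_distrib]
      map_smul' := by
        intro a c
        ext ξ
        simp only [ContinuousLinearMap.coe_sum', Finset.sum_apply,
          ContinuousLinearMap.smulRight_apply, ContinuousLinearMap.smul_apply,
          Pi.smul_apply, RingHom.id_apply, Finset.smul_sum]
        refine congrArg (fun y : EuclideanSpace ℝ (Fin n) => y.ofLp _) ?_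
        refine Finset.sum_congr rfl fun k _ => ?_
        rw [smul_comm] } with hΛ₀
  set Λ := LinearMap.toContinuousLinearMap Λ₀ with hΛdef
  have hΛ : ∀ T : (EuclideanSpace ℝ (Fin n)) →L[ℝ] (EuclideanSpace ℝ (Fin n)),
      Λ (fun i => T (EuclideanSpace.single i (1:ℝ))) = T := by
    intro T
    ext ξ
    have : Λ (fun i => T (EuclideanSpace.single i (1:ℝ))) ξ
        = ∑ i, (ξ i) • T (EuclideanSpace.single i (1:ℝ)) := by
      simp [hΛdef, hΛ₀]
    rw [this]
    simp only [← T.map_smul, ← map_sum, hrepr]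
  have hg : HasDerivAt (fun s i => F s (EuclideanSpace.single i (1:ℝ)))
      (fun i => F' (EuclideanSpace.single i (1:ℝ))) t :=
    hasDerivAt_pi.2 fun i => h _
  have h2 := Λ.hasFDerivAt.comp_hasDerivAt t hg
  simp only [Function.comp_def, hΛ] at h2
  exact h2

theorem stmt10 (n : ℕ) (K α γ μ M : ℝ)
    (hK : 1 ≤ K) (hα : 0 < α) (hγ : 0 < γ) (hμ : 0 < μ) (hM : 0 < M)
    (A : ℝ → (EuclideanSpace ℝ (Fin n)) →L[ℝ] (EuclideanSpace ℝ (Fin n)))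
    (hAcont : Continuous A) (hAbdd : ∀ t, 0 ≤ t → ‖A t‖ ≤ M)
    (Φ : ℝ → ℝ → ((EuclideanSpace ℝ (Fin n)) →L[ℝ] (EuclideanSpace ℝ (Fin n))))
    (hΦid : ∀ s, Φ s s = ContinuousLinearMap.id ℝ (EuclideanSpace ℝ (Fin n)))
    (hΦderiv : ∀ s ξ t, HasDerivAt (fun r => Φ r s ξ) (A t (Φ t s ξ)) t)
    (hΦcocycle : ∀ t s r, (Φ t s).comp (Φ s r) = Φ t r)
    (hΦdecay : ∀ s t, 0 ≤ s → s ≤ t → ‖Φ t s‖ ≤ K * Real.exp (-α * (t - s)))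
    (f : ℝ → (EuclideanSpace ℝ (Fin n)) → (EuclideanSpace ℝ (Fin n)))
    (hfcont : Continuous fun p : ℝ × (EuclideanSpace ℝ (Fin n)) => f p.1 p.2)
    (hflip : ∀ t u v, 0 ≤ t → ‖f t u - f t v‖ ≤ γ * ‖u - v‖)
    (hfbdd : ∀ t u, 0 ≤ t → ‖f t u‖ ≤ μ)
    (hsmall : K * γ / α < 1)
    (u v : (EuclideanSpace ℝ (Fin n)))
    (hu : ∀ t, 0 ≤ t → A t u + f t u = 0)
    (hv : ∀ t, 0 ≤ t → A t v + f t v = 0) :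
    u = v := by
  set w : EuclideanSpace ℝ (Fin n) := u - v with hwdef
  set δ : ℝ → EuclideanSpace ℝ (Fin n) := fun s => -(A s w) with hδdef
  -- δ agrees with the difference of f's for s ≥ 0
  have hδf : ∀ s, 0 ≤ s → δ s = f s u - f s v := by
    intro s hs
    have h1 : A s u = -(f s u) := eq_neg_of_add_eq_zero_left (hu s hs)
    have h2 : A s v = -(f s v) := eq_neg_of_add_eq_zero_left (hv s hs)
    simp only [hδdef, hwdef, map_sub, h1, h2]
    abel
  have hδnorm : ∀ s, 0 ≤ s → ‖δ s‖ ≤ γ * ‖w‖ := by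
    intro s hs
    rw [hδf s hs, hwdef]
    exact hflip s u v hs
  have hδcont : Continuous δ := (hAcont.clm_apply continuous_const).neg
  -- derivative of s ↦ Φ s 0 in operator norm
  have hFd : ∀ t, HasDerivAt (fun s => Φ s 0) ((A t).comp (Φ t 0)) t := by
    intro t
    refine opDeriv _ _ t fun ξ => ?_
    simpa using hΦderiv 0 ξ t
  have hFc : Continuous (fun s => Φ s 0) :=
    continuous_iff_continuousAt.2 fun t => (hFd t).differentiableAt.continuousAt
  -- Φ s 0 is a unit with inverse Φ 0 s
  have hunit1 : ∀ s, Φ s 0 * Φ 0 s = 1 := by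
    intro s
    rw [ContinuousLinearMap.mul_def, hΦcocycle s 0 s, hΦid, ContinuousLinearMap.one_def]
  have hunit2 : ∀ s, Φ 0 s * Φ s 0 = 1 := by
    intro s
    rw [ContinuousLinearMap.mul_def, hΦcocycle 0 s 0, hΦid, ContinuousLinearMap.one_def]
  have hGinv : ∀ s, Ring.inverse (Φ s 0) = Φ 0 s := fun s =>
    Ring.inverse_unit ⟨Φ s 0, Φ 0 s, hunit1 s, hunit2 s⟩
  have hGc : Continuous (fun s => Φ 0 s) := by
    have : Continuous (fun s => Ring.inverse (Φ s 0)) := by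
      refine continuous_iff_continuousAt.2 fun s => ?_
      exact ContinuousAt.comp (g := Ring.inverse) (f := fun s' : ℝ => Φ s' 0) (x := s)
        (NormedRing.inverse_continuousAt ⟨Φ s 0, Φ 0 s, hunit1 s, hunit2 s⟩)
        hFc.continuousAt
    simpa only [hGinv] using this
  -- the integral J and x
  have hintcont : Continuous (fun s => Φ 0 s (δ s)) := hGc.clm_apply hδcont
  set J : ℝ → EuclideanSpace ℝ (Fin n) := fun t => ∫ s in (0:ℝ)..t, Φ 0 s (δ s) with hJdef
  have hJd : ∀ t, HasDerivAt J (Φ 0 t (δ t)) t := fun t =>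
    (hintcont.integral_hasStrictDerivAt 0 t).hasDerivAt
  set x : ℝ → EuclideanSpace ℝ (Fin n) := fun t => Φ t 0 (J t) with hxdef
  have hid_apply : ∀ t (ξ : EuclideanSpace ℝ (Fin n)), Φ t 0 (Φ 0 t ξ) = ξ := by
    intro t ξ
    rw [← ContinuousLinearMap.comp_apply, hΦcocycle t 0 t, hΦid]
    rfl
  have hxd : ∀ t, HasDerivAt x (A t (x t) + δ t) t := by
    intro t
    have h := (hFd t).clm_apply (hJd t)
    simpa only [ContinuousLinearMap.comp_apply, hid_apply] using h
  -- d := Φ t 0 w - w + x t satisfies d' = A d, d 0 = 0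
  set d : ℝ → EuclideanSpace ℝ (Fin n) := fun t => Φ t 0 w - w + x t with hddef
  have hdd : ∀ t, HasDerivAt d (A t (d t)) t := by
    intro t
    have h := ((hΦderiv 0 w t).sub_const w).add (hxd t)
    have heq : A t (Φ t 0 w) + (A t (x t) + δ t) = A t (d t) := by
      simp only [hddef, hδdef, map_add, map_sub]
      abel
    rw [heq] at h
    exact h
  have hJ0 : J 0 = 0 := intervalIntegral.integral_same
  have hd0 : d 0 = 0 := by
    show Φ 0 0 w - w + Φ 0 0 (J 0) = 0
    rw [hJ0, map_zero, add_zero, hΦid, ContinuousLinearMap.id_apply, sub_self]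
  have hdzero : ∀ T, 0 ≤ T → d T = 0 := by
    intro T hT
    have hcont : ContinuousOn d (Set.Icc 0 T) :=
      (continuous_iff_continuousAt.2 fun t =>
        (hdd t).differentiableAt.continuousAt).continuousOn
    have hder : ∀ t ∈ Set.Ico (0:ℝ) T, HasDerivWithinAt d (A t (d t)) (Set.Ici t) t :=
      fun t _ => (hdd t).hasDerivWithinAt
    have hbound : ∀ t ∈ Set.Ico (0:ℝ) T, ‖A t (d t)‖ ≤ M * ‖d t‖ + 0 := by
      intro t ht
      rw [add_zero]
      calc ‖A t (d t)‖ ≤ ‖A t‖ * ‖d t‖ := (A t).le_opNorm _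
        _ ≤ M * ‖d t‖ := mul_le_mul_of_nonneg_right (hAbdd t ht.1) (norm_nonneg _)
    have ha : ‖d 0‖ ≤ 0 := by rw [hd0]; simp
    have := norm_le_gronwallBound_of_norm_deriv_right_le hcont hder ha hbound T
      ⟨hT, le_refl T⟩
    rw [gronwallBound_ε0_δ0] at this
    exact norm_le_zero_iff.mp this
  -- hence the variation-of-constants identity
  have hvoc : ∀ T, 0 ≤ T → w = Φ T 0 w + x T := by
    intro T hT
    have h := hdzero T hT
    simp only [hddef] at h
    rw [sub_add_eq_add_sub, sub_eq_zero] at h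
    exact h.symm
  -- norm bound on x T
  have hxbound : ∀ T, 0 ≤ T → ‖x T‖ ≤ K * γ * ‖w‖ / α := by
    intro T hT
    have hint : IntervalIntegrable (fun s => Φ 0 s (δ s)) volume 0 T :=
      hintcont.intervalIntegrable 0 T
    have hxrep : x T = ∫ s in (0:ℝ)..T, Φ T s (δ s) := by
      rw [hxdef]
      simp only [hJdef]
      rw [← (Φ T 0).intervalIntegral_comp_comm hint]
      refine intervalIntegral.integral_congr fun s _ => ?_
      rw [← ContinuousLinearMap.comp_apply, hΦcocycle T 0 s]
    have hΦTs_cont : Continuous (fun s => Φ T s (δ s)) := by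
      have : (fun s => Φ T s (δ s)) = fun s => Φ T 0 (Φ 0 s (δ s)) := by
        funext s
        rw [← ContinuousLinearMap.comp_apply, hΦcocycle T 0 s]
      rw [this]
      exact (Φ T 0).continuous.comp hintcont
    set g : ℝ → ℝ := fun s => K * γ * ‖w‖ * Real.exp (-α * (T - s)) with hgdef
    have hgcont : Continuous g := by
      rw [hgdef]
      exact continuous_const.mul (Real.continuous_exp.comp
        (continuous_const.mul (continuous_const.sub continuous_id)))
    have step1 : ‖x T‖ ≤ ∫ s in (0:ℝ)..T, ‖Φ T s (δ s)‖ := by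
      rw [hxrep]
      exact intervalIntegral.norm_integral_le_integral_norm hT
    have step2 : (∫ s in (0:ℝ)..T, ‖Φ T s (δ s)‖) ≤ ∫ s in (0:ℝ)..T, g s := by
      refine intervalIntegral.integral_mono_on hT
        (hΦTs_cont.norm.intervalIntegrable 0 T) (hgcont.intervalIntegrable 0 T) ?_
      intro s hs
      calc ‖Φ T s (δ s)‖ ≤ ‖Φ T s‖ * ‖δ s‖ := (Φ T s).le_opNorm _
        _ ≤ (K * Real.exp (-α * (T - s))) * (γ * ‖w‖) := by
            refine mul_le_mul (hΦdecay s T hs.1 hs.2) (hδnorm s hs.1) (norm_nonneg _) ?_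
            positivity
        _ = g s := by rw [hgdef]; ring
    have step3 : (∫ s in (0:ℝ)..T, g s)
        = K * γ * ‖w‖ / α * (1 - Real.exp (-α * T)) := by
      have hH : ∀ s : ℝ, HasDerivAt (fun r => K * γ * ‖w‖ / α * Real.exp (-α * (T - r)))
          (g s) s := by
        intro s
        have h0 : HasDerivAt (fun r : ℝ => T - r) (-1) s := (hasDerivAt_id s).const_sub T
        have h1 : HasDerivAt (fun r : ℝ => -α * (T - r)) (-α * -1) s := h0.const_mul (-α)
        have h2 := (h1.exp).const_mul (K * γ * ‖w‖ / α)
        refine h2.congr_deriv ?_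
        rw [hgdef]
        field_simp
      rw [intervalIntegral.integral_eq_sub_of_hasDerivAt (fun s _ => hH s)
        (hgcont.intervalIntegrable 0 T)]
      simp only [sub_self, sub_zero, mul_zero, Real.exp_zero]
      ring
    have hfinal : ‖x T‖ ≤ K * γ * ‖w‖ / α * (1 - Real.exp (-α * T)) := by
      rw [← step3]
      exact step1.trans step2
    have hle1 : K * γ * ‖w‖ / α * (1 - Real.exp (-α * T)) ≤ K * γ * ‖w‖ / α := by
      have h1 : (0:ℝ) < Real.exp (-α * T) := Real.exp_pos _
      have h2 : 0 ≤ K * γ * ‖w‖ / α := by positivity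
      nlinarith
    exact hfinal.trans hle1
  -- main estimate
  have hest : ∀ T, 0 ≤ T → ‖w‖ ≤ K * Real.exp (-α * T) * ‖w‖ + K * γ * ‖w‖ / α := by
    intro T hT
    have h := hvoc T hT
    calc ‖w‖ = ‖Φ T 0 w + x T‖ := by rw [← h]
      _ ≤ ‖Φ T 0 w‖ + ‖x T‖ := norm_add_le _ _
      _ ≤ K * Real.exp (-α * T) * ‖w‖ + K * γ * ‖w‖ / α := by
          refine add_le_add ?_ (hxbound T hT)
          calc ‖Φ T 0 w‖ ≤ ‖Φ T 0‖ * ‖w‖ := (Φ T 0).le_opNorm _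
            _ ≤ K * Real.exp (-α * T) * ‖w‖ := by
                refine mul_le_mul_of_nonneg_right ?_ (norm_nonneg _)
                have h3 := hΦdecay 0 T (le_refl 0) hT
                rwa [sub_zero] at h3
  -- take T → ∞
  have hlim : Tendsto (fun T : ℝ => K * Real.exp (-α * T) * ‖w‖ + K * γ * ‖w‖ / α)
      atTop (𝓝 (K * 0 * ‖w‖ + K * γ * ‖w‖ / α)) := by
    have h1 : Tendsto (fun T : ℝ => -α * T) atTop atBot := by
      have := Tendsto.const_mul_atTop hα (tendsto_id (α := ℝ))
      have h2 := tendsto_neg_atTop_atBot.comp this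
      simpa [Function.comp_def, neg_mul] using h2
    have h2 : Tendsto (fun T : ℝ => Real.exp (-α * T)) atTop (𝓝 0) :=
      Real.tendsto_exp_atBot.comp h1
    exact (((h2.const_mul K).mul_const ‖w‖).add_const _)
  have hw_le : ‖w‖ ≤ K * 0 * ‖w‖ + K * γ * ‖w‖ / α := by
    refine ge_of_tendsto hlim ?_
    filter_upwards [eventually_ge_atTop (0:ℝ)] with T hT using hest T hT
  have hw0 : ‖w‖ = 0 := by
    rw [mul_zero, zero_mul, zero_add] at hw_le
    have hKγα : K * γ * ‖w‖ / α = (K * γ / α) * ‖w‖ := by ring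
    rw [hKγα] at hw_le
    have hle0 : ‖w‖ ≤ 0 := by nlinarith [norm_nonneg w]
    exact le_antisymm hle0 (norm_nonneg w)
  have : w = 0 := norm_eq_zero.mp hw0
  rw [hwdef] at this
  exact sub_eq_zero.mp this
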